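/- Let Î be an instance on [n] and let X̂ = {n}. For any partition of [n] into consecutive intervals with right endpoints y_1 < ⋯ < y_l = n, letting Î_i be the restriction of Î to the i-th interval, it holds that D(Î, X̂) ≤ ∑_{i=1}^{l} D(Î_i, {y_i}) + ∑_{i=1}^{l} Δ(Î, X̂, y_i), where each Δ is taken on the full instance Î. -/

import Mathlib

open Finset

/-- Waiting time from `t` until the first acknowledgment in `X` at or after `t` (`0` if none). -/
noncomputable def ackWait (X : Finset ℕ) (t : ℕ) : ℕ :=
  if h : (X.filter fun x => t ≤ x).Nonempty then (X.filter fun x => t ≤ x).min' h - t else 0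

/-- Delay cost `D(I,X)` of solution `X` for the instance `p` on horizon `{a, …, b}`
with delay parameter `d`. -/
noncomputable def delayCost (d : ℝ) (a b : ℕ) (p : ℕ → ℝ) (X : Finset ℕ) : ℝ :=
  (1 / d) * ∑ t ∈ Finset.Icc a b, p t * (ackWait X t : ℝ)

/-- Total cost `F(I,X) = |X| + D(I,X)`. -/
noncomputable def cost (d : ℝ) (a b : ℕ) (p : ℕ → ℝ) (X : Finset ℕ) : ℝ :=
  (X.card : ℝ) + delayCost d a b p X

/-- Feasibility of `X` for the instance `p` on horizon `{a,…,b}`: `X` is a nonempty subset of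
the horizon and every time with positive demand has an acknowledgment at or after it. -/
def Feasible (a b : ℕ) (p : ℕ → ℝ) (X : Finset ℕ) : Prop :=
  X.Nonempty ∧ X ⊆ Finset.Icc a b ∧ ∀ t ∈ Finset.Icc a b, 0 < p t → ∃ x ∈ X, t ≤ x

/-- Optimal cost `opt(I)` of the instance `p` on horizon `{a,…,b}`. -/
noncomputable def opt (d : ℝ) (a b : ℕ) (p : ℕ → ℝ) : ℝ :=
  sInf {c : ℝ | ∃ X : Finset ℕ, Feasible a b p X ∧ cost d a b p X = c}

/-- `Δ(I,Y,t) = D(I,Y) − D(I,Y ∪ {t})`. -/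
noncomputable def delta (d : ℝ) (a b : ℕ) (p : ℕ → ℝ) (Y : Finset ℕ) (t : ℕ) : ℝ :=
  delayCost d a b p Y - delayCost d a b p (insert t Y)

/-- Auxiliary error `τ([t1,t2], I, Î) = opt(O(I⟨t1,t2⟩,Î⟨t1,t2⟩)) − opt(U(I⟨t1,t2⟩,Î⟨t1,t2⟩))`. -/
noncomputable def auxErr (d : ℝ) (t1 t2 : ℕ) (p q : ℕ → ℝ) : ℝ :=
  opt d t1 t2 (fun t => max (p t) (q t)) - opt d t1 t2 (fun t => min (p t) (q t))


lemma mono_aux (y : ℕ → ℕ) (l : ℕ) (h : ∀ i < l, y i < y (i+1)) :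
    ∀ i j, i ≤ j → j ≤ l → y i ≤ y j := by
  intro i j hij hjl
  induction j with
  | zero => obtain rfl : i = 0 := Nat.le_zero.mp hij; exact le_rfl
  | succ k ih =>
    rcases Nat.lt_or_ge i (k+1) with h' | h'
    · exact le_trans (ih (by omega) (by omega)) (le_of_lt (h k (by omega)))
    · obtain rfl : i = k + 1 := by omega
      exact le_rfl

lemma ackWait_singleton (m t : ℕ) : ackWait {m} t = m - t := by
  unfold ackWait
  by_cases h : t ≤ m
  · have hf : ({m} : Finset ℕ).filter (fun x => t ≤ x) = {m} := by
      simp [Finset.filter_singleton, h]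
    rw [hf, dif_pos ⟨m, Finset.mem_singleton_self m⟩]
    simp
  · have hf : ({m} : Finset ℕ).filter (fun x => t ≤ x) = ∅ := by
      simp [Finset.filter_singleton, h]
    simp [hf, Nat.sub_eq_zero_of_le (le_of_not_ge h)]

lemma ackWait_pair (m n t : ℕ) (hmn : m ≤ n) :
    ackWait (insert m {n}) t = if t ≤ m then m - t else n - t := by
  unfold ackWait
  by_cases h1 : t ≤ m
  · have hf : (insert m {n} : Finset ℕ).filter (fun x => t ≤ x) = insert m {n} := by
      apply Finset.filter_true_of_mem
      intro x hx
      simp only [Finset.mem_insert, Finset.mem_singleton] at hx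
      rcases hx with rfl | rfl
      · exact h1
      · exact h1.trans hmn
    rw [hf, dif_pos ⟨m, Finset.mem_insert_self _ _⟩, if_pos h1]
    congr 1
    refine le_antisymm (Finset.min'_le _ m (Finset.mem_insert_self _ _)) ?_
    apply Finset.le_min'
    intro x hx
    simp only [Finset.mem_insert, Finset.mem_singleton] at hx
    rcases hx with rfl | rfl
    · exact le_rfl
    · exact hmn
  · by_cases h2 : t ≤ n
    · have hf : (insert m {n} : Finset ℕ).filter (fun x => t ≤ x) = {n} := by
        ext x
        simp only [Finset.mem_filter, Finset.mem_insert, Finset.mem_singleton]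
        constructor
        · rintro ⟨rfl | rfl, hx⟩
          · exact absurd hx h1
          · rfl
        · rintro rfl; exact ⟨Or.inr rfl, h2⟩
      rw [hf, dif_pos ⟨n, Finset.mem_singleton_self n⟩]
      simp [h1]
    · have hf : (insert m {n} : Finset ℕ).filter (fun x => t ≤ x) = ∅ := by
        ext x
        simp only [Finset.mem_filter, Finset.mem_insert, Finset.mem_singleton,
          Finset.notMem_empty, iff_false, not_and]
        rintro (rfl | rfl)
        · exact h1
        · exact h2
      simp [hf, h1, Nat.sub_eq_zero_of_le (le_of_not_ge h2)]

lemma delta_eq (d : ℝ) (n m : ℕ) (p : ℕ → ℝ) (hm : m ≤ n) :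
    delta d 1 n p {n} m = (1/d) * ∑ t ∈ Finset.Icc 1 m, p t * ((n : ℝ) - (m : ℝ)) := by
  unfold delta delayCost
  rw [← mul_sub, ← Finset.sum_sub_distrib]
  congr 1
  have h1 : Finset.Icc 1 n = Finset.Ioc 0 n := by exact Finset.Icc_add_one_left_eq_Ioc 0 n
  have h2 : Finset.Icc 1 m = Finset.Ioc 0 m := by exact Finset.Icc_add_one_left_eq_Ioc 0 m
  rw [h1, h2, ← Finset.sum_Ioc_consecutive _ (Nat.zero_le m) hm]
  have hz : ∑ t ∈ Finset.Ioc m n,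
      (p t * ((ackWait {n} t : ℕ) : ℝ) - p t * ((ackWait (insert m {n}) t : ℕ) : ℝ)) = 0 := by
    apply Finset.sum_eq_zero
    intro t ht
    rw [Finset.mem_Ioc] at ht
    rw [ackWait_singleton, ackWait_pair m n t hm, if_neg (by omega)]
    ring
  rw [hz, add_zero]
  apply Finset.sum_congr rfl
  intro t ht
  rw [Finset.mem_Ioc] at ht
  rw [ackWait_singleton, ackWait_pair m n t hm, if_pos ht.2,
    Nat.cast_sub (ht.2.trans hm), Nat.cast_sub ht.2]
  ring

lemma sum_partition (f : ℕ → ℝ) (y : ℕ → ℕ) (l : ℕ) (h : ∀ i < l, y i < y (i+1)) :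
    ∑ t ∈ Finset.Ioc (y 0) (y l), f t
      = ∑ i ∈ Finset.Icc 1 l, ∑ t ∈ Finset.Ioc (y (i-1)) (y i), f t := by
  induction l with
  | zero => simp
  | succ k ih =>
    have h' : ∀ i < k, y i < y (i+1) := fun i hi => h i (by omega)
    rw [← Finset.sum_Ioc_consecutive f
        (mono_aux y k (fun i hi => h i (by omega)) 0 k (Nat.zero_le k) le_rfl)
        (le_of_lt (h k (by omega))),
      Finset.sum_Icc_succ_top (by omega : 1 ≤ k + 1), ih h']
    simp
/-- for `X̂ = {n}` and any partition of `[n]` into consecutive intervals with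
right endpoints `y_1 < ⋯ < y_l = n`,
`D(Î,X̂) ≤ ∑_{i=1}^l D(Î_i,{y_i}) + ∑_{i=1}^l Δ(Î,X̂,y_i)`, where each `Δ` is taken on the
full instance `Î`. -/
theorem delay_single_ack_le_partition (d : ℝ) (hd : 0 < d) (n l : ℕ) (hl : 0 < l)
    (p : ℕ → ℝ) (hp : ∀ t, 0 ≤ p t)
    (y : ℕ → ℕ) (hy0 : y 0 = 0) (hmono : ∀ i < l, y i < y (i + 1)) (hyl : y l = n) :
    delayCost d 1 n p {n}
      ≤ ∑ i ∈ Finset.Icc 1 l, delayCost d (y (i - 1) + 1) (y i) p {y i}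
        + ∑ i ∈ Finset.Icc 1 l, delta d 1 n p {n} (y i) := by
  have hd1 : (0:ℝ) ≤ 1/d := by positivity
  have hmono' : ∀ i j, i ≤ j → j ≤ l → y i ≤ y j := mono_aux y l hmono
  have hyn : ∀ i ≤ l, y i ≤ n := fun i hi => hyl ▸ hmono' i l hi le_rfl
  have hL : delayCost d 1 n p {n}
      = ∑ i ∈ Finset.Icc 1 l,
          ((1/d) * ∑ t ∈ Finset.Ioc (y (i-1)) (y i), p t * ((n - t : ℕ) : ℝ)) := by
    unfold delayCost
    have e1 : ∑ t ∈ Finset.Icc 1 n, p t * ((ackWait {n} t : ℕ) : ℝ)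
        = ∑ t ∈ Finset.Ioc (y 0) (y l), p t * ((n - t : ℕ) : ℝ) := by
      rw [hy0, hyl, ← Finset.Icc_add_one_left_eq_Ioc]
      exact Finset.sum_congr rfl (fun t _ => by rw [ackWait_singleton])
    rw [e1, sum_partition _ y l hmono, Finset.mul_sum]
  rw [hL, ← Finset.sum_add_distrib]
  apply Finset.sum_le_sum
  intro i hi
  rw [Finset.mem_Icc] at hi
  have hy1 : y i ≤ n := hyn i hi.2
  have hA : delayCost d (y (i-1) + 1) (y i) p {y i}
      = (1/d) * ∑ t ∈ Finset.Ioc (y (i-1)) (y i), p t * ((y i - t : ℕ) : ℝ) := by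
    unfold delayCost
    rw [Finset.Icc_add_one_left_eq_Ioc]
    exact congrArg _ (Finset.sum_congr rfl (fun t _ => by rw [ackWait_singleton]))
  rw [hA, delta_eq d n (y i) p hy1]
  have hsplit : ∀ t ∈ Finset.Ioc (y (i-1)) (y i),
      p t * ((n - t : ℕ) : ℝ) = p t * ((y i - t : ℕ) : ℝ) + p t * ((n:ℝ) - ((y i : ℕ) : ℝ)) := by
    intro t ht
    rw [Finset.mem_Ioc] at ht
    rw [Nat.cast_sub (ht.2.trans hy1), Nat.cast_sub ht.2]
    ring
  rw [Finset.sum_congr rfl hsplit, Finset.sum_add_distrib, mul_add]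
  refine add_le_add le_rfl ?_
  apply mul_le_mul_of_nonneg_left ?_ hd1
  apply Finset.sum_le_sum_of_subset_of_nonneg
  · intro t ht
    rw [Finset.mem_Ioc] at ht
    rw [Finset.mem_Icc]
    omega
  · intro t _ _
    exact mul_nonneg (hp t) (sub_nonneg.mpr (by exact_mod_cast hy1))
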